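/- Let P₁ be a directed path v_1 → v_2 → ... → v_m in an edge-coloured graph, and suppose there are indices 2 ≤ k ≤ a < m and auxiliary directed edges e = v_a v_1 and e' = v_{k-1} v_{a+1} whose colours are distinct from each other and from all colours on P₁. Then the directed walk v_k → v_{k+1} → ... → v_a → v_1 → v_2 → ... → v_{k-1} → v_{a+1} → ... → v_m is a directed path on exactly the vertex set {v_1,...,v_m}, and if P₁ was rainbow then this rotated path is also rainbow. -/

import Mathlib

private lemma ztA {α : Type*} (x y : α) (l₂ : List α) : ∀ (l₁ : List α),
    ((l₁ ++ [x]) ++ y :: l₂).zip (((l₁ ++ [x]) ++ y :: l₂)).tail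
      = (l₁ ++ [x]).zip (l₁ ++ [x]).tail ++ (x, y) :: ((y :: l₂).zip ((y :: l₂)).tail) := by
  intro l₁
  induction l₁ with
  | nil => simp
  | cons z t ih =>
    cases t with
    | nil => simp
    | cons w t' =>
      simp only [List.cons_append, List.tail_cons, List.zip_cons_cons] at ih ⊢
      rw [ih]

private lemma ztR : ∀ (n s : ℕ),
    ((List.range' s (n + 1)).zip (List.range' s (n + 1)).tail)
      = (List.range' s n).map (fun i => (i, i + 1)) := by
  intro n
  induction n with
  | zero => intro s; simp
  | succ n ih =>
    intro s
    rw [List.range'_succ (s := s) (n := n+1), List.range'_succ (s := s+1) (n := n), ← List.range'_succ (s := s+1) (n := n)]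
    show ((s, s+1) :: (List.range' (s+1) (n+1)).zip (List.range' (s+1) (n+1)).tail) = _
    rw [ih, List.range'_succ (s := s) (n := n)]
    simp

private lemma rcat (s n : ℕ) : List.range' s n ++ [s + n] = List.range' s (n + 1) := by
  have := List.range'_concat (step := 1) (s := s) (n := n)
  rw [show s + 1 * n = s + n by omega] at this
  exact this.symm

private lemma rsucc (s n : ℕ) : List.range' s (n + 1) = s :: List.range' (s + 1) n :=
  List.range'_succ (s := s) (n := n) (step := 1)

theorem stmt16 {V C : Type*} [DecidableEq V]
    (m k a : ℕ) (hk : 2 ≤ k) (hka : k ≤ a) (ham : a < m)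
    (v : ℕ → V) (hinj : Set.InjOn v (Set.Icc 1 m))
    (c : V × V → C)
    -- the two auxiliary edges have distinct colours ...
    (hee' : c (v a, v 1) ≠ c (v (k - 1), v (a + 1)))
    -- ... distinct from all the colours on P₁
    (he : ∀ i, 1 ≤ i → i < m → c (v a, v 1) ≠ c (v i, v (i + 1)))
    (he' : ∀ i, 1 ≤ i → i < m → c (v (k - 1), v (a + 1)) ≠ c (v i, v (i + 1))) :
    -- the rotated walk  v_k → ... → v_a → v_1 → ... → v_{k-1} → v_{a+1} → ... → v_m
    let w : List V := ((List.range' k (a - k + 1)).map v) ++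
        ((List.range' 1 (k - 1)).map v) ++ ((List.range' (a + 1) (m - a)).map v)
    -- is a directed path on exactly the vertices of P₁ ...
    w.Nodup ∧ w.toFinset = ((List.range' 1 m).map v).toFinset ∧
    -- ... and if P₁ was rainbow then the rotated path is rainbow
    (((List.range' 1 (m - 1)).map (fun i => c (v i, v (i + 1)))).Nodup →
      ((w.zip w.tail).map c).Nodup) := by
  obtain ⟨p, rfl⟩ : ∃ p, k = p + 2 := ⟨k - 2, by omega⟩
  obtain ⟨q, rfl⟩ : ∃ q, a = p + 2 + q := ⟨a - (p + 2), by omega⟩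
  obtain ⟨r, rfl⟩ : ∃ r, m = p + 2 + q + 1 + r := ⟨m - (p + 2 + q + 1), by omega⟩
  have e1 : p + 2 + q - (p + 2) + 1 = q + 1 := by omega
  have e2 : p + 2 - 1 = p + 1 := by omega
  have e3 : p + 2 + q + 1 + r - (p + 2 + q) = r + 1 := by omega
  have e4 : p + 2 + q + 1 + r - 1 = p + q + r + 2 := by omega
  simp only [e1, e2, e3, e4] at hee' he' ⊢
  rw [← List.map_append (f := v), ← List.map_append (f := v)]
  set idx : List ℕ := List.range' (p+2) (q+1) ++ List.range' 1 (p+1) ++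
      List.range' (p+2+q+1) (r+1) with hidxdef
  -- decomposition of range' 1 m
  have h1 : List.range' 1 (p+1) ++ List.range' (p+2) (q+1) = List.range' 1 (p+q+2) := by
    have := List.range'_append (s := 1) (m := p+1) (n := q+1) (step := 1)
    rw [show 1 + 1 * (p+1) = p + 2 by omega, show (p+1) + (q + 1) = p + q + 2 by omega] at this
    exact this
  have h2 : List.range' 1 (p+q+2) ++ List.range' (p+2+q+1) (r+1) = List.range' 1 (p+2+q+1+r) := by
    have := List.range'_append (s := 1) (m := p+q+2) (n := r+1) (step := 1)
    rw [show 1 + 1 * (p+q+2) = p+2+q+1 by omega,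
      show (p+q+2) + (r + 1) = p+2+q+1+r by omega] at this
    exact this
  have hperm : idx.Perm (List.range' 1 (p+2+q+1+r)) := by
    rw [← h2, ← h1, hidxdef]
    exact List.perm_append_comm.append_right _
  have hmem : ∀ x ∈ List.range' 1 (p+2+q+1+r), x ∈ Set.Icc 1 (p+2+q+1+r) := by
    intro x hx
    rw [List.mem_range'] at hx
    obtain ⟨j, hj, rfl⟩ := hx
    constructor <;> omega
  have hnd : ((List.range' 1 (p+2+q+1+r)).map v).Nodup :=
    (List.nodup_range' (s := 1) (n := _)).map_on (fun x hx y hy hxy => hinj (hmem x hx) (hmem y hy) hxy)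
  have hwperm : (idx.map v).Perm ((List.range' 1 (p+2+q+1+r)).map v) := hperm.map v
  refine ⟨hwperm.symm.nodup hnd, ?_, ?_⟩
  · ext x
    simp only [List.mem_toFinset]
    exact hwperm.mem_iff
  intro hrb
  rw [← List.map_tail (f := v) (l := idx), List.zip_map, List.map_map]
  have hd1 : idx = (List.range' (p+2) q ++ [p+2+q]) ++
      (1 :: (List.range' 2 p ++ List.range' (p+2+q+1) (r+1))) := by
    rw [hidxdef, ← rcat (p+2) q, rsucc 1 p]
    simp [List.append_assoc]
  have E : (1 : ℕ) :: (List.range' 2 p ++ List.range' (p+2+q+1) (r+1))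
      = (List.range' 1 p ++ [1+p]) ++ ((p+2+q+1) :: List.range' (p+2+q+1+1) r) := by
    rw [rcat 1 p, ← rsucc (p+2+q+1) r, rsucc 1 p]
    simp [List.cons_append]
  rw [hd1, ztA, E, ztA, ← rsucc (p+2+q+1) r, rcat (p+2) q, rcat 1 p, ztR, ztR, ztR]
  simp only [List.map_append, List.map_cons, List.map_map, Function.comp_def, Prod.map_apply]
  rw [show 1 + p = p + 1 by omega]
  set g : ℕ → C := fun x => c (v x, v (x + 1)) with hg
  set B1 := List.map g (List.range' (p+2) q) with hB1
  set B2 := List.map g (List.range' 1 p) with hB2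
  set B3 := List.map g (List.range' (p+2+q+1) r) with hB3
  set x := c (v (p + 2 + q), v 1) with hx
  set y := c (v (p + 1), v (p + 2 + q + 1)) with hy
  have key : (B1 ++ x :: (B2 ++ y :: B3)).Perm (x :: y :: (B2 ++ B1 ++ B3)) := by
    refine List.perm_middle.trans (List.Perm.cons _ ?_)
    rw [← List.append_assoc]
    exact List.perm_middle.trans (List.Perm.cons _ (List.perm_append_comm.append_right _))
  refine key.symm.nodup ?_
  have hfull : ((List.range' 1 p ++ [1+p]) ++ (List.range' (p+2) q ++ [p+2+q])) ++
      List.range' (p+2+q+1) r = List.range' 1 (p+q+r+2) := by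
    rw [rcat 1 p, rcat (p+2) q, h1]
    have := List.range'_append (s := 1) (m := p+q+2) (n := r) (step := 1)
    rw [show 1 + 1*(p+q+2) = p+2+q+1 by omega, show (p+q+2) + r = p+q+r+2 by omega] at this
    exact this
  have hsub : ((List.range' 1 p ++ List.range' (p+2) q) ++ List.range' (p+2+q+1) r).Sublist
      (List.range' 1 (p+q+r+2)) := by
    rw [← hfull]
    exact ((List.sublist_append_left _ _).append (List.sublist_append_left _ _)).append
      (List.Sublist.refl _)
  have hrest : (B2 ++ B1 ++ B3).Nodup := by
    rw [hB1, hB2, hB3, ← List.map_append, ← List.map_append]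
    exact ((hsub.map g).nodup) hrb
  have hmm2 : ∀ z ∈ B2 ++ B1 ++ B3, ∃ i, 1 ≤ i ∧ i < p+2+q+1+r ∧ z = c (v i, v (i+1)) := by
    intro z hz
    rw [hB1, hB2, hB3] at hz
    simp only [List.mem_append, List.mem_map, List.mem_range'] at hz
    rcases hz with ((⟨i, ⟨j, hj, rfl⟩, rfl⟩) | (⟨i, ⟨j, hj, rfl⟩, rfl⟩)) | (⟨i, ⟨j, hj, rfl⟩, rfl⟩) <;>
      exact ⟨_, by omega, by omega, rfl⟩
  rw [List.nodup_cons, List.nodup_cons]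
  refine ⟨?_, ?_, hrest⟩
  · intro hxmem
    rcases List.mem_cons.mp hxmem with h | h
    · exact hee' h
    · obtain ⟨i, h1', h2', h3'⟩ := hmm2 _ h
      rw [hx] at h3'
      exact he i h1' h2' h3'
  · intro hymem
    obtain ⟨i, h1', h2', h3'⟩ := hmm2 _ hymem
    rw [hy] at h3'
    exact he' i h1' h2' h3'
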